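/- arXiv:2311.12413 — 4 statements merged into one kernel-verified Lean document; each statement's English description precedes it below -/
import Mathlib

section
/- Let P_1,…,P_K be probability measures on (Ω,ℱ) and X a random variable with max_i E_{P_i}[X²] < ∞. Then the upper variance V̄(X) := min_{μ∈ℝ} max_{1≤i≤K} E_{P_i}[(X−μ)²] equals sup over λ ∈ Δ^K of Var_{P_λ}(X), where P_λ = Σ_i λ_i P_i. In particular, the minimax value equals the maximum of Var_P(X) over the convex hull of {P_1,…,P_K}. -/
open MeasureTheory

lemma upper_var_key {K : ℕ} (hK : 0 < K) (a b : Fin K → ℝ) :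
    (⨅ μ : ℝ, ⨆ i, (b i - 2 * a i * μ + μ ^ 2))
      = ⨆ l : {l : Fin K → ℝ // (∀ i, 0 ≤ l i) ∧ ∑ i, l i = 1},
          (∑ i, l.1 i * b i - (∑ i, l.1 i * a i) ^ 2) := by
  haveI : Nonempty (Fin K) := ⟨⟨0, hK⟩⟩
  set g : ℝ → Fin K → ℝ := fun μ i => b i - 2 * a i * μ + μ ^ 2 with hg
  set V : {l : Fin K → ℝ // (∀ i, 0 ≤ l i) ∧ ∑ i, l i = 1} → ℝ :=
    fun l => ∑ i, l.1 i * b i - (∑ i, l.1 i * a i) ^ 2 with hV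
  haveI : Nonempty {l : Fin K → ℝ // (∀ i, 0 ≤ l i) ∧ ∑ i, l i = 1} := by
    refine ⟨⟨fun _ => (K : ℝ)⁻¹, fun i => by positivity, ?_⟩⟩
    simp [Finset.sum_const]
    field_simp
  have hbddB : BddBelow (Set.range fun μ => ⨆ i, g μ i) := by
    refine ⟨b ⟨0, hK⟩ - (a ⟨0, hK⟩) ^ 2, ?_⟩
    rintro y ⟨μ, rfl⟩
    refine le_trans ?_ (le_ciSup (Set.Finite.bddAbove (Set.finite_range _)) (⟨0, hK⟩ : Fin K))
    simp only [hg]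
    nlinarith [sq_nonneg (μ - a ⟨0, hK⟩)]
  have hbddA : BddAbove (Set.range V) := by
    refine ⟨Finset.univ.sup' Finset.univ_nonempty b, ?_⟩
    rintro y ⟨l, rfl⟩
    have h1 : ∑ i, l.1 i * b i ≤ Finset.univ.sup' Finset.univ_nonempty b := by
      calc ∑ i, l.1 i * b i
          ≤ ∑ i, l.1 i * Finset.univ.sup' Finset.univ_nonempty b :=
            Finset.sum_le_sum fun i _ =>
              mul_le_mul_of_nonneg_left (Finset.le_sup' b (Finset.mem_univ i)) (l.2.1 i)
        _ = Finset.univ.sup' Finset.univ_nonempty b := by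
            rw [← Finset.sum_mul, l.2.2, one_mul]
    have := sq_nonneg (∑ i, l.1 i * a i)
    simp only [hV]; linarith
  apply le_antisymm
  · -- hard direction
    obtain ⟨x, hxS, hmax⟩ :=
      (isCompact_stdSimplex ℝ (Fin K)).exists_isMaxOn ⟨fun _ => (K : ℝ)⁻¹, by
        constructor
        · intro i; positivity
        · simp [Finset.sum_const]; field_simp⟩
        (Continuous.continuousOn (by
          refine Continuous.sub ?_ ((Continuous.pow ?_ 2))
          · exact continuous_finset_sum _ fun i _ => (continuous_apply i).mul continuous_const
          · exact continuous_finset_sum _ fun i _ => (continuous_apply i).mul continuous_const) :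
          ContinuousOn (fun l : Fin K → ℝ => ∑ i, l i * b i - (∑ i, l i * a i) ^ 2) _)
    set m := ∑ i, x i * a i with hm
    set B := ∑ i, x i * b i with hB
    have hkey : ∀ i, b i - 2 * a i * m + m ^ 2 ≤ B - m ^ 2 := by
      intro i
      set d := a i - m with hd
      set c := b i - B - 2 * m * d with hc
      have ht : ∀ t ∈ Set.Ioc (0:ℝ) 1, c ≤ t * d ^ 2 := by
        intro t htIoc
        set y : Fin K → ℝ := fun j => (1 - t) * x j + t * (if j = i then 1 else 0) with hy
        have hyS : y ∈ stdSimplex ℝ (Fin K) := by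
          constructor
          · intro j
            have h1 : (0:ℝ) ≤ 1 - t := by linarith [htIoc.2]
            have h2 : (0:ℝ) ≤ if j = i then (1:ℝ) else 0 := by split_ifs <;> norm_num
            exact add_nonneg (mul_nonneg h1 (hxS.1 j)) (mul_nonneg htIoc.1.le h2)
          · simp only [hy, Finset.sum_add_distrib, ← Finset.mul_sum, hxS.2,
              Finset.sum_ite_eq' Finset.univ i (fun _ => (1:ℝ)), Finset.mem_univ, if_true]
            ring
        have hW := hmax hyS
        simp only [Set.mem_setOf_eq] at hW
        have ha' : ∑ j, y j * a j = (1 - t) * m + t * a i := by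
          simp only [hy, add_mul, Finset.sum_add_distrib, mul_assoc, ← Finset.mul_sum, ← hm]
          congr 1
          congr 1
          rw [Finset.sum_congr rfl (fun j _ => by
            rw [ite_mul, one_mul, zero_mul]),
            Finset.sum_ite_eq' Finset.univ i a]
          simp
        have hb' : ∑ j, y j * b j = (1 - t) * B + t * b i := by
          simp only [hy, add_mul, Finset.sum_add_distrib, mul_assoc, ← Finset.mul_sum, ← hB]
          congr 1
          congr 1
          rw [Finset.sum_congr rfl (fun j _ => by
            rw [ite_mul, one_mul, zero_mul]),
            Finset.sum_ite_eq' Finset.univ i b]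
          simp
        rw [ha', hb'] at hW
        have htpos := htIoc.1
        simp only [hc, hd]
        nlinarith [hW, htpos, mul_pos htpos htpos]
      suffices hcz : c ≤ 0 by simp only [hc, hd] at hcz; linarith
      by_contra hcle
      push_neg at hcle
      have hd2 : (0:ℝ) ≤ d ^ 2 := sq_nonneg d
      set t := min 1 (c / (2 * d ^ 2 + 1)) with htdef
      have htpos : 0 < t := lt_min one_pos (div_pos hcle (by positivity))
      have h1 := ht t ⟨htpos, min_le_left _ _⟩
      have h2 : t * d ^ 2 ≤ (c / (2 * d ^ 2 + 1)) * d ^ 2 :=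
        mul_le_mul_of_nonneg_right (min_le_right _ _) hd2
      have h3 : c ≤ c * d ^ 2 / (2 * d ^ 2 + 1) := by
        calc c ≤ t * d ^ 2 := h1
          _ ≤ (c / (2 * d ^ 2 + 1)) * d ^ 2 := h2
          _ = c * d ^ 2 / (2 * d ^ 2 + 1) := by ring
      rw [le_div_iff₀ (by positivity)] at h3
      nlinarith [mul_nonneg hcle.le hd2]
    have hFm : (⨆ i, g m i) ≤ B - m ^ 2 := ciSup_le fun i => hkey i
    refine le_trans (ciInf_le hbddB m) (le_trans hFm ?_)
    exact le_ciSup hbddA ⟨x, hxS.1, hxS.2⟩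
  · refine ciSup_le fun l => le_ciInf fun μ => ?_
    set m := ∑ i, l.1 i * a i with hm
    set B := ∑ i, l.1 i * b i with hB
    have e1 : ∑ i, l.1 i * g μ i = B - 2 * μ * m + μ ^ 2 := by
      have h1 : ∀ i, l.1 i * g μ i
          = l.1 i * b i - (2 * μ) * (l.1 i * a i) + μ ^ 2 * l.1 i := fun i => by
        simp only [hg]; ring
      simp_rw [h1, Finset.sum_add_distrib, Finset.sum_sub_distrib, ← Finset.mul_sum, l.2.2,
        ← hm, ← hB]
      ring
    have e2 : V l ≤ ∑ i, l.1 i * g μ i := by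
      rw [e1]; simp only [hV, ← hm, ← hB]; nlinarith [sq_nonneg (μ - m)]
    refine le_trans e2 ?_
    calc ∑ i, l.1 i * g μ i
        ≤ ∑ i, l.1 i * (⨆ j, g μ j) :=
          Finset.sum_le_sum fun i _ =>
            mul_le_mul_of_nonneg_left
              (le_ciSup (Set.Finite.bddAbove (Set.finite_range _)) i) (l.2.1 i)
      _ = ⨆ j, g μ j := by rw [← Finset.sum_mul, l.2.2, one_mul]

/-- Variance envelope theorem: the upper variance
`V̄(X) = min_μ max_i E_{P_i}[(X-μ)²]` equals the supremum of `Var_{P_λ}(X)` over the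
convex hull of `{P_1, …, P_K}` (mixtures `P_λ = ∑ λ_i P_i`, `λ` in the unit simplex). -/
theorem upper_variance_stmt2
    {Ω : Type*} [MeasurableSpace Ω] {K : ℕ} (hK : 0 < K)
    (P : Fin K → Measure Ω) [∀ i, IsProbabilityMeasure (P i)]
    (X : Ω → ℝ) (hX : ∀ i, Integrable X (P i))
    (hX2 : ∀ i, Integrable (fun ω => X ω ^ 2) (P i)) :
    (⨅ μ : ℝ, ⨆ i, ∫ ω, (X ω - μ) ^ 2 ∂(P i))
      = ⨆ l : {l : Fin K → ℝ // (∀ i, 0 ≤ l i) ∧ ∑ i, l i = 1},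
          (∫ ω, (X ω - ∫ ω', X ω' ∂(∑ i, ENNReal.ofReal (l.1 i) • P i)) ^ 2
            ∂(∑ i, ENNReal.ofReal (l.1 i) • P i)) := by
  set a : Fin K → ℝ := fun i => ∫ ω, X ω ∂P i with ha
  set b : Fin K → ℝ := fun i => ∫ ω, X ω ^ 2 ∂P i with hb
  have hg : ∀ (i : Fin K) (μ : ℝ), ∫ ω, (X ω - μ) ^ 2 ∂P i = b i - 2 * a i * μ + μ ^ 2 := by
    intro i μ
    have h1 : (fun ω => (X ω - μ) ^ 2)
        = fun ω => (X ω ^ 2 - (2 * μ) * X ω) + μ ^ 2 := by funext ω; ring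
    have I1 : Integrable (fun ω => X ω ^ 2 - (2 * μ) * X ω) (P i) :=
      (hX2 i).sub ((hX i).const_mul (2 * μ))
    have I2 : Integrable (fun ω => X ω ^ 2) (P i) := hX2 i
    have I3 : Integrable (fun ω => (2 * μ) * X ω) (P i) := (hX i).const_mul (2 * μ)
    rw [h1, integral_add I1 (integrable_const _), integral_sub I2 I3,
      integral_const_mul, integral_const]
    simp only [measure_univ, probReal_univ, ENNReal.toReal_one, smul_eq_mul, one_mul]
    ring
  -- integrals against the mixture
  have hmix : ∀ (l : {l : Fin K → ℝ // (∀ i, 0 ≤ l i) ∧ ∑ i, l i = 1}) (f : Ω → ℝ),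
      (∀ i, Integrable f (P i)) →
      ∫ ω, f ω ∂(∑ i, ENNReal.ofReal (l.1 i) • P i) = ∑ i, l.1 i * ∫ ω, f ω ∂P i := by
    intro l f hf
    rw [integral_finset_sum_measure (fun i _ => (hf i).smul_measure ENNReal.ofReal_ne_top)]
    refine Finset.sum_congr rfl fun i _ => ?_
    rw [integral_smul_measure, ENNReal.toReal_ofReal (l.2.1 i), smul_eq_mul]
  have hRHS : ∀ (l : {l : Fin K → ℝ // (∀ i, 0 ≤ l i) ∧ ∑ i, l i = 1}),
      (∫ ω, (X ω - ∫ ω', X ω' ∂(∑ i, ENNReal.ofReal (l.1 i) • P i)) ^ 2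
            ∂(∑ i, ENNReal.ofReal (l.1 i) • P i))
        = ∑ i, l.1 i * b i - (∑ i, l.1 i * a i) ^ 2 := by
    intro l
    have hmean : ∫ ω', X ω' ∂(∑ i, ENNReal.ofReal (l.1 i) • P i) = ∑ i, l.1 i * a i :=
      hmix l X hX
    rw [hmean]
    set m := ∑ i, l.1 i * a i with hm
    have hint : ∀ i, Integrable (fun ω => (X ω - m) ^ 2) (P i) := by
      intro i
      have h1 : (fun ω => (X ω - m) ^ 2)
          = fun ω => (X ω ^ 2 - (2 * m) * X ω) + m ^ 2 := by funext ω; ring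
      rw [h1]
      exact ((hX2 i).sub ((hX i).const_mul (2 * m))).add (integrable_const _)
    rw [hmix l _ hint]
    have : ∀ i, ∫ ω, (X ω - m) ^ 2 ∂P i = b i - 2 * a i * m + m ^ 2 := fun i => hg i m
    simp_rw [this]
    have h2 : ∀ i, l.1 i * (b i - 2 * a i * m + m ^ 2)
        = l.1 i * b i - (2 * m) * (l.1 i * a i) + m ^ 2 * l.1 i := fun i => by ring
    simp_rw [h2, Finset.sum_add_distrib, Finset.sum_sub_distrib, ← Finset.mul_sum, l.2.2, ← hm]
    ring
  calc (⨅ μ : ℝ, ⨆ i, ∫ ω, (X ω - μ) ^ 2 ∂(P i))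
      = ⨅ μ : ℝ, ⨆ i, (b i - 2 * a i * μ + μ ^ 2) :=
        iInf_congr fun μ => iSup_congr fun i => hg i μ
    _ = ⨆ l : {l : Fin K → ℝ // (∀ i, 0 ≤ l i) ∧ ∑ i, l i = 1},
          (∑ i, l.1 i * b i - (∑ i, l.1 i * a i) ^ 2) := upper_var_key hK a b
    _ = _ := (iSup_congr fun l => (hRHS l).symm)
end

section
/- Two-measure formula for the minimax: let μ_1 ≤ μ_2 and κ_1, κ_2 ∈ ℝ with κ_i ≥ μ_i² (i = 1,2), and define f_i(μ) = μ² − 2μ_i μ + κ_i, h(x) = x² − 2μ_1 x + κ_1, and μ₁₂ = (μ_1 ∨ (κ_2 − κ_1)/(2(μ_2 − μ_1))) ∧ μ_2 when μ_1 < μ_2, while μ₁₂ = μ_1 when μ_1 = μ_2. Then min over μ ∈ [μ_1, μ_2] of max{f_1(μ), f_2(μ)} = max{κ_1 − μ_1², κ_2 − μ_2², h(μ₁₂)}. -/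
/-- Two-measure formula for the minimax: for `μ₁ ≤ μ₂`, `κ_i ≥ μ_i²`,
`min_{μ ∈ [μ₁, μ₂]} max{f₁(μ), f₂(μ)} = max{κ₁ - μ₁², κ₂ - μ₂², h(μ₁₂)}` where
`h(x) = x² - 2μ₁x + κ₁` and `μ₁₂` is the clamped intersection point. -/
theorem upper_variance_stmt8
    (μ₁ μ₂ κ₁ κ₂ : ℝ) (h : μ₁ ≤ μ₂) (h1 : μ₁ ^ 2 ≤ κ₁) (h2 : μ₂ ^ 2 ≤ κ₂) :
    sInf ((fun x : ℝ =>
        max (x ^ 2 - 2 * μ₁ * x + κ₁) (x ^ 2 - 2 * μ₂ * x + κ₂)) '' Set.Icc μ₁ μ₂)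
      = max (max (κ₁ - μ₁ ^ 2) (κ₂ - μ₂ ^ 2))
          ((fun x : ℝ => x ^ 2 - 2 * μ₁ * x + κ₁)
            (if μ₁ < μ₂ then min (max μ₁ ((κ₂ - κ₁) / (2 * (μ₂ - μ₁)))) μ₂ else μ₁)) := by
  simp only
  set c := (κ₂ - κ₁) / (2 * (μ₂ - μ₁)) with hcdef
  set m := if μ₁ < μ₂ then min (max μ₁ c) μ₂ else μ₁ with hmdef
  set R := max (max (κ₁ - μ₁ ^ 2) (κ₂ - μ₂ ^ 2)) (m ^ 2 - 2 * μ₁ * m + κ₁) with hR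
  have hm1 : μ₁ ≤ m := by
    rw [hmdef]; split
    · exact le_min (le_max_left _ _) h
    · exact le_rfl
  have hm2 : m ≤ μ₂ := by
    rw [hmdef]; split
    · exact min_le_right _ _
    · exact h
  have hcprod : μ₁ < μ₂ → 2 * (μ₂ - μ₁) * c = κ₂ - κ₁ := by
    intro hlt
    rw [hcdef, mul_div_cancel₀]
    exact ne_of_gt (by linarith)
  have L : ∀ x ∈ Set.Icc μ₁ μ₂,
      R ≤ max (x ^ 2 - 2 * μ₁ * x + κ₁) (x ^ 2 - 2 * μ₂ * x + κ₂) := by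
    intro x hx
    obtain ⟨hx1, hx2⟩ := hx
    refine max_le (max_le ?_ ?_) ?_
    · exact le_max_of_le_left (by nlinarith [sq_nonneg (x - μ₁)])
    · exact le_max_of_le_right (by nlinarith [sq_nonneg (x - μ₂)])
    · rcases le_or_gt m x with hmx | hxm
      · refine le_max_of_le_left ?_
        nlinarith [mul_nonneg (sub_nonneg.2 hmx) (by linarith : (0:ℝ) ≤ x + m - 2 * μ₁)]
      · -- x < m, so μ₁ < μ₂ and m ≤ c
        have hlt : μ₁ < μ₂ := by
          by_contra hcon
          rw [hmdef, if_neg hcon] at hxm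
          linarith
        have hmc : m ≤ c := by
          have hμc : μ₁ < c := by
            by_contra hcon
            push_neg at hcon
            rw [hmdef, if_pos hlt, max_eq_left hcon] at hxm
            have := min_le_left μ₁ μ₂
            linarith [min_le_left μ₁ μ₂, hx1, (by rw [hmdef, if_pos hlt, max_eq_left hcon] : m = min μ₁ μ₂)]
          calc m ≤ max μ₁ c := by rw [hmdef, if_pos hlt]; exact min_le_left _ _
          _ = c := max_eq_right hμc.le
        have hp1 : 0 ≤ 2 * (μ₂ - μ₁) * (c - m) :=
          mul_nonneg (by linarith) (by linarith)
        have hp2 : 0 ≤ (m - x) * (2 * μ₂ - m - x) :=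
          mul_nonneg (by linarith) (by linarith)
        refine le_max_of_le_right ?_
        nlinarith [hcprod hlt]
  have hmem : max (m ^ 2 - 2 * μ₁ * m + κ₁) (m ^ 2 - 2 * μ₂ * m + κ₂) ∈
      (fun x : ℝ => max (x ^ 2 - 2 * μ₁ * x + κ₁) (x ^ 2 - 2 * μ₂ * x + κ₂)) '' Set.Icc μ₁ μ₂ :=
    ⟨m, ⟨hm1, hm2⟩, rfl⟩
  have E : max (m ^ 2 - 2 * μ₁ * m + κ₁) (m ^ 2 - 2 * μ₂ * m + κ₂) ≤ R := by
    refine max_le (le_max_right _ _) ?_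
    rcases eq_or_lt_of_le hm2 with heq | hlt2
    · rw [heq]
      refine le_max_of_le_left (le_max_of_le_right ?_)
      nlinarith
    · have hlt : μ₁ < μ₂ := by
        by_contra hcon
        rw [hmdef, if_neg hcon] at hlt2
        have : μ₁ = μ₂ := le_antisymm h (not_lt.1 hcon)
        linarith
      have h3 : max μ₁ c ≤ μ₂ := by
        by_contra hcon
        push_neg at hcon
        rw [hmdef, if_pos hlt, min_eq_right hcon.le] at hlt2
        exact lt_irrefl _ hlt2
      have hcm : c ≤ m := by
        rw [hmdef, if_pos hlt, min_eq_left h3]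
        exact le_max_right _ _
      refine le_max_of_le_right ?_
      nlinarith [hcprod hlt, mul_nonneg (by linarith : (0:ℝ) ≤ 2 * (μ₂ - μ₁)) (by linarith : (0:ℝ) ≤ m - c)]
  have hbdd : BddBelow ((fun x : ℝ =>
      max (x ^ 2 - 2 * μ₁ * x + κ₁) (x ^ 2 - 2 * μ₂ * x + κ₂)) '' Set.Icc μ₁ μ₂) :=
    ⟨R, by rintro y ⟨x, hx, rfl⟩; exact L x hx⟩
  refine le_antisymm (le_trans (csInf_le hbdd hmem) E) ?_
  exact le_csInf ⟨_, hmem⟩ (by rintro y ⟨x, hx, rfl⟩; exact L x hx)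
end

section
/- General formula for the minimax of K parabolas: let μ_1 ≤ μ_2 ≤ ⋯ ≤ μ_K and κ_1,…,κ_K ∈ ℝ with κ_i ≥ μ_i² for all i. Define f_i(μ) = μ² − 2μ_i μ + κ_i, h_{ij}(x) = x² − 2μ_i x + κ_i, and for i < j set μ_{ij} = (μ_i ∨ (κ_j − κ_i)/(2(μ_j − μ_i))) ∧ μ_j if μ_i < μ_j, and μ_{ij} = μ_i if μ_i = μ_j. Then min over μ ∈ [μ_1, μ_K] of max_{1≤i≤K} f_i(μ) = max{ max_{1≤i≤K} (κ_i − μ_i²), max_{1≤i<j≤K} h_{ij}(μ_{ij}) }. -/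
lemma upper_variance_aux_L (a b c d x m : ℝ) (hab : a ≤ b)
    (hm : m = if a < b then min (max a ((d - c) / (2 * (b - a)))) b else a) :
    m ^ 2 - 2 * a * m + c ≤ max (x ^ 2 - 2 * a * x + c) (x ^ 2 - 2 * b * x + d) := by
  rcases lt_or_ge a b with h | h
  · rw [if_pos h] at hm
    set s := (d - c) / (2 * (b - a)) with hs
    have hba : (0:ℝ) < b - a := by linarith
    have hsd : s * (2 * (b - a)) = d - c := div_mul_cancel₀ _ (by positivity)
    rcases le_or_gt s a with h2 | h2
    · have hma : m = a := by rw [hm, max_eq_left h2, min_eq_left h.le]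
      subst hma
      refine le_trans ?_ (le_max_left _ _)
      nlinarith [sq_nonneg (x - m)]
    · have hma : a ≤ m := by rw [hm]; exact le_min (le_max_of_le_right h2.le) h.le
      have hms : m ≤ s := by rw [hm, max_eq_right h2.le]; exact min_le_left _ _
      have hmb : m ≤ b := by rw [hm]; exact min_le_right _ _
      rcases le_or_gt m x with h3 | h3
      · refine le_trans ?_ (le_max_left _ _)
        nlinarith [mul_nonneg (sub_nonneg.2 h3) (by linarith : (0:ℝ) ≤ x + m - 2 * a)]
      · refine le_trans ?_ (le_max_right _ _)
        nlinarith [mul_nonneg (sub_nonneg.2 h3.le) (by linarith : (0:ℝ) ≤ 2 * b - m - x),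
          mul_nonneg (sub_nonneg.2 hms) hba.le]
  · have hab' : a = b := le_antisymm hab h
    rw [if_neg (not_lt.mpr h)] at hm
    subst hm
    refine le_trans ?_ (le_max_left _ _)
    nlinarith [sq_nonneg (x - m)]

lemma upper_variance_aux_U (a b c d m : ℝ) (hab : a ≤ b)
    (hm : m = if a < b then min (max a ((d - c) / (2 * (b - a)))) b else a) :
    m ^ 2 - 2 * b * m + d ≤ max (c - a ^ 2) (max (d - b ^ 2) (m ^ 2 - 2 * a * m + c)) := by
  rcases lt_or_ge a b with h | h
  · rw [if_pos h] at hm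
    set s := (d - c) / (2 * (b - a)) with hs
    have hba : (0:ℝ) < b - a := by linarith
    have hsd : s * (2 * (b - a)) = d - c := div_mul_cancel₀ _ (by positivity)
    rcases le_or_gt s a with h2 | h2
    · have hma : m = a := by rw [hm, max_eq_left h2, min_eq_left h.le]
      subst hma
      refine le_trans ?_ (le_max_left _ _)
      nlinarith [mul_le_mul_of_nonneg_right h2 (by nlinarith : (0:ℝ) ≤ 2 * (b - m))]
    · rcases le_or_gt s b with h3 | h3
      · have hms : m = s := by rw [hm, max_eq_right h2.le, min_eq_left h3]
        refine le_trans ?_ (le_max_of_le_right (le_max_right _ _))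
        nlinarith [hsd, hms]
      · have hmb : m = b := by
          rw [hm, max_eq_right h2.le, min_eq_right h3.le]
        subst hmb
        refine le_trans ?_ (le_max_of_le_right (le_max_left _ _))
        nlinarith []
  · have hab' : a = b := le_antisymm hab h
    rw [if_neg (not_lt.mpr h)] at hm
    subst hm
    refine le_trans ?_ (le_max_of_le_right (le_max_left _ _))
    nlinarith [hab']

set_option maxHeartbeats 2000000 in
/-- General formula for the minimax of `K` parabolas: for sorted means `μ_1 ≤ ⋯ ≤ μ_K` with
`κ_i ≥ μ_i²`, the minimum over `[μ_1, μ_K]` of `max_i f_i` equals the maximum of the parabola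
minima `κ_i - μ_i²` and the pairwise values `h_{ij}(μ_{ij})`. -/
theorem upper_variance_stmt9
    {K : ℕ} (hK : 2 ≤ K) (μ κ : Fin K → ℝ) (hmono : Monotone μ)
    (hκ : ∀ i, μ i ^ 2 ≤ κ i) :
    sInf ((fun x : ℝ => ⨆ i, (x ^ 2 - 2 * μ i * x + κ i)) ''
        Set.Icc (μ ⟨0, by omega⟩) (μ ⟨K - 1, by omega⟩))
      = max (⨆ i, (κ i - μ i ^ 2))
          ((Finset.univ.filter fun p : Fin K × Fin K => p.1 < p.2).sup'
            ⟨(⟨0, by omega⟩, ⟨1, by omega⟩), by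
              exact Finset.mem_filter.mpr ⟨Finset.mem_univ _, by exact Fin.mk_lt_mk.mpr (by omega)⟩⟩
            (fun p =>
              (fun x : ℝ => x ^ 2 - 2 * μ p.1 * x + κ p.1)
                (if μ p.1 < μ p.2 then
                  min (max (μ p.1) ((κ p.2 - κ p.1) / (2 * (μ p.2 - μ p.1)))) (μ p.2)
                 else μ p.1))) := by
  have hK0 : 0 < K := by omega
  haveI : Nonempty (Fin K) := ⟨⟨0, hK0⟩⟩
  set i0 : Fin K := ⟨0, by omega⟩ with hi0
  set iK : Fin K := ⟨K - 1, by omega⟩ with hiK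
  set f : Fin K → ℝ → ℝ := fun i x => x ^ 2 - 2 * μ i * x + κ i with hf
  set mm : Fin K → Fin K → ℝ := fun i j =>
    if μ i < μ j then min (max (μ i) ((κ j - κ i) / (2 * (μ j - μ i)))) (μ j) else μ i with hmm
  have hbddf : ∀ x : ℝ, BddAbove (Set.range fun i => f i x) :=
    fun x => (Set.finite_range _).bddAbove
  have hbddA : BddAbove (Set.range fun i => κ i - μ i ^ 2) := (Set.finite_range _).bddAbove
  set t : ℝ := max (⨆ i, (κ i - μ i ^ 2))
          ((Finset.univ.filter fun p : Fin K × Fin K => p.1 < p.2).sup'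
            ⟨(⟨0, by omega⟩, ⟨1, by omega⟩), by
              exact Finset.mem_filter.mpr ⟨Finset.mem_univ _, by exact Fin.mk_lt_mk.mpr (by omega)⟩⟩
            (fun p => f p.1 (mm p.1 p.2))) with ht
  show sInf ((fun x : ℝ => ⨆ i, f i x) '' Set.Icc (μ i0) (μ iK)) = t
  have hi0K : i0 ≤ iK := by rw [hi0, hiK]; exact Fin.mk_le_mk.mpr (by omega)
  have hA : ∀ i, κ i - μ i ^ 2 ≤ t := fun i => (le_ciSup hbddA i).trans (le_max_left _ _)
  have hB : ∀ i j : Fin K, i < j → f i (mm i j) ≤ t := by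
    intro i j hij
    refine le_trans ?_ (le_max_right _ _)
    exact Finset.le_sup' (fun p : Fin K × Fin K => f p.1 (mm p.1 p.2))
      (Finset.mem_filter.mpr ⟨Finset.mem_univ (i, j), hij⟩)
  have hU : ∀ i j : Fin K, i < j → f j (mm i j) ≤ t := by
    intro i j hij
    have h1 := upper_variance_aux_U (μ i) (μ j) (κ i) (κ j) (mm i j) (hmono hij.le) rfl
    exact h1.trans (max_le (hA i) (max_le (hA j) (hB i j hij)))
  -- lower bound: t ≤ every value of F on the interval
  have hlow : ∀ x ∈ Set.Icc (μ i0) (μ iK), t ≤ ⨆ i, f i x := by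
    intro x _
    refine max_le ?_ ?_
    · refine ciSup_le fun i => le_trans ?_ (le_ciSup (hbddf x) i)
      have : 0 ≤ (x - μ i) ^ 2 := sq_nonneg _
      simp only [hf]; nlinarith
    · refine Finset.sup'_le _ _ fun p hp => ?_
      have hlt : p.1 < p.2 := (Finset.mem_filter.mp hp).2
      have hL := upper_variance_aux_L (μ p.1) (μ p.2) (κ p.1) (κ p.2) x (mm p.1 p.2)
        (hmono hlt.le) rfl
      exact hL.trans (max_le (le_ciSup (hbddf x) p.1) (le_ciSup (hbddf x) p.2))
  -- radii
  set r : Fin K → ℝ := fun i => Real.sqrt (t - (κ i - μ i ^ 2)) with hr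
  have hr0 : ∀ i, 0 ≤ r i := fun i => Real.sqrt_nonneg _
  have hr2 : ∀ i, r i ^ 2 = t - (κ i - μ i ^ 2) :=
    fun i => Real.sq_sqrt (by linarith [hA i])
  have hpair : ∀ i j : Fin K, ∃ m, (m - μ i) ^ 2 ≤ r i ^ 2 ∧ (m - μ j) ^ 2 ≤ r j ^ 2 := by
    intro i j
    rcases lt_trichotomy i j with hij | hij | hij
    · refine ⟨mm i j, ?_, ?_⟩
      · have := hB i j hij; rw [hr2 i]; simp only [hf] at this; nlinarith
      · have := hU i j hij; rw [hr2 j]; simp only [hf] at this; nlinarith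
    · subst hij
      exact ⟨μ i, by simpa using sq_nonneg (r i), by simpa using sq_nonneg (r i)⟩
    · refine ⟨mm j i, ?_, ?_⟩
      · have := hU j i hij; rw [hr2 i]; simp only [hf] at this; nlinarith
      · have := hB j i hij; rw [hr2 j]; simp only [hf] at this; nlinarith
  have hcross : ∀ i j : Fin K, μ i - r i ≤ μ j + r j := by
    intro i j
    obtain ⟨m, h1, h2⟩ := hpair i j
    have e1 : μ i - r i ≤ m := by nlinarith [hr0 i]
    have e2 : m ≤ μ j + r j := by nlinarith [hr0 j]
    linarith
  -- the optimal point
  set x₀ : ℝ := max (μ i0) (Finset.univ.sup' ⟨i0, Finset.mem_univ i0⟩ fun i => μ i - r i)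
    with hx₀
  have hx₀mem : x₀ ∈ Set.Icc (μ i0) (μ iK) := by
    constructor
    · exact le_max_left _ _
    · refine max_le (hmono hi0K) (Finset.sup'_le _ _ fun i _ => ?_)
      have : i ≤ iK := by
        rw [hiK]
        exact Fin.le_def.mpr (show i.1 ≤ K - 1 by omega)
      linarith [hr0 i, hmono this]
  have hkey : ∀ j, f j x₀ ≤ t := by
    intro j
    have hlow' : μ j - r j ≤ x₀ :=
      le_trans (Finset.le_sup' (fun i => μ i - r i) (Finset.mem_univ j)) (le_max_right _ _)
    have hi0j : i0 ≤ j := by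
      rw [hi0]
      exact Fin.le_def.mpr (show 0 ≤ j.1 by omega)
    have hhigh : x₀ ≤ μ j + r j :=
      max_le (by linarith [hr0 j, hmono hi0j]) (Finset.sup'_le _ _ fun i _ => hcross i j)
    have hrr := hr2 j
    simp only [hf]
    nlinarith [mul_nonneg (by linarith : (0:ℝ) ≤ μ j + r j - x₀)
      (by linarith : (0:ℝ) ≤ x₀ - (μ j - r j))]
  refine le_antisymm ?_ (le_csInf ((Set.nonempty_Icc.mpr (hmono hi0K)).image _)
    (by rintro y ⟨x, hx, rfl⟩; exact hlow x hx))
  have hmem : (⨆ i, f i x₀) ∈ (fun x : ℝ => ⨆ i, f i x) '' Set.Icc (μ i0) (μ iK) :=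
    ⟨x₀, hx₀mem, rfl⟩
  have hbb : BddBelow ((fun x : ℝ => ⨆ i, f i x) '' Set.Icc (μ i0) (μ iK)) := by
    refine ⟨0, ?_⟩
    rintro y ⟨x, hx, rfl⟩
    refine le_trans ?_ (le_ciSup (hbddf x) i0)
    simp only [hf]
    nlinarith [sq_nonneg (x - μ i0), hκ i0]
  exact (csInf_le hbb hmem).trans (ciSup_le hkey)
end

section
/- The upper variance can strictly exceed the maximal variance over the extreme measures: if X ∼ N(0.1, 0.4) under P_1 and X ∼ N(−0.1, 0.4) under P_2, then V̄(X) = Var_{P*}(X) = 0.41 > 0.4 = max{Var_{P_1}(X), Var_{P_2}(X)}, where P* = (P_1 + P_2)/2, while the lower variance equals 0.4. -/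
open MeasureTheory ProbabilityTheory Real Set
open scoped NNReal ENNReal


lemma coe04 : ((0.4:ℝ≥0):ℝ) = 0.4 := by norm_num
lemma ne04 : (0.4:ℝ≥0) ≠ 0 := by
  intro h
  have : ((0.4:ℝ≥0):ℝ) = 0 := by rw [h]; simp
  rw [coe04] at this; norm_num at this

lemma int_odd_exp {b:ℝ} : ∫ x:ℝ, x * rexp (-b*x^2) = 0 := by
  have h := (Measure.measurePreserving_neg (volume : Measure ℝ)).integral_comp
      (Homeomorph.neg ℝ).measurableEmbedding (fun y : ℝ => y * rexp (-b*y^2))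
  simp only [neg_sq, neg_mul] at h ⊢
  rw [integral_neg] at h
  linarith

lemma int_sq_exp {b:ℝ} (hb : 0 < b) :
    ∫ x:ℝ, x^2 * rexp (-b*x^2) = √π / (2 * b * √b) := by
  have h1 : ∫ x:ℝ, x^2 * rexp (-b*x^2) = 2 * ∫ x in Ioi (0:ℝ), x^2 * rexp (-b*x^2) := by
    rw [← integral_comp_abs (f := fun y : ℝ => y^2 * rexp (-b*y^2))]
    simp [sq_abs]
  have h2 : ∫ x in Ioi (0:ℝ), x^2 * rexp (-b*x^2)
      = b ^ (-(2+1)/2 : ℝ) * (1/2) * Real.Gamma ((2+1)/2) := by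
    rw [← integral_rpow_mul_exp_neg_mul_rpow (by norm_num) (by norm_num) hb]
    refine setIntegral_congr_fun measurableSet_Ioi (fun x hx => ?_)
    rw [← Real.rpow_natCast x 2]
    norm_num
  have hG : Real.Gamma ((2+1)/2) = √π / 2 := by
    rw [show ((2+1)/2 : ℝ) = 1/2 + 1 by norm_num, Real.Gamma_add_one (by norm_num),
      Real.Gamma_one_half_eq]
    ring
  have hb' : b ^ (-(2+1)/2 : ℝ) = (b * √b)⁻¹ := by
    rw [show (-(2+1)/2 : ℝ) = -(1 + 1/2) by norm_num, Real.rpow_neg hb.le, Real.rpow_add hb,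
      Real.rpow_one, Real.sqrt_eq_rpow]
  rw [h1, h2, hG, hb']
  have : √b ≠ 0 := by positivity
  field_simp

lemma pdf0_eq (v : ℝ≥0) :
    gaussianPDFReal 0 v = fun x => (√(2*π*v))⁻¹ * rexp (-(2*(v:ℝ))⁻¹ * x^2) := by
  ext x
  rw [gaussianPDFReal]
  congr 1
  rw [sub_zero]
  by_cases hv : (v:ℝ) = 0
  · simp [hv]
  · field_simp

lemma pdf0_moment2 {v : ℝ≥0} (hv : v ≠ 0) :
    ∫ x:ℝ, gaussianPDFReal 0 v x * x^2 = v := by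
  have hv' : (0:ℝ) < v := lt_of_le_of_ne v.coe_nonneg (by exact_mod_cast hv.symm)
  have hb : (0:ℝ) < (2*(v:ℝ))⁻¹ := by positivity
  have he : (fun x:ℝ => gaussianPDFReal 0 v x * x^2)
      = fun x => (√(2*π*v))⁻¹ * (x^2 * rexp (-(2*(v:ℝ))⁻¹ * x^2)) := by
    rw [pdf0_eq]; ext x; ring
  rw [he, integral_const_mul, int_sq_exp hb, Real.sqrt_inv]
  have h2v : (0:ℝ) < 2*(v:ℝ) := by positivity
  have hs : √(2*π*v) = √π * √(2*v) := by
    rw [show 2*π*(v:ℝ) = π * (2*v) by ring, Real.sqrt_mul pi_pos.le]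
  rw [hs]
  have e1 : √(2*(v:ℝ)) ≠ 0 := by positivity
  have e2 : √π ≠ 0 := by positivity
  have e3 : √(2*(v:ℝ)) * √(2*(v:ℝ)) = 2*(v:ℝ) := Real.mul_self_sqrt h2v.le
  field_simp

lemma pdf0_moment1 (v : ℝ≥0) : ∫ x:ℝ, gaussianPDFReal 0 v x * x = 0 := by
  have he : (fun x:ℝ => gaussianPDFReal 0 v x * x)
      = fun x => (√(2*π*v))⁻¹ * (x * rexp (-(2*(v:ℝ))⁻¹ * x^2)) := by
    rw [pdf0_eq]; ext x; ring
  rw [he, integral_const_mul, int_odd_exp, mul_zero]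

lemma integrable_pdf0_moment2 {v : ℝ≥0} (hv : v ≠ 0) :
    Integrable (fun x:ℝ => gaussianPDFReal 0 v x * x^2) := by
  have hv' : (0:ℝ) < v := lt_of_le_of_ne v.coe_nonneg (by exact_mod_cast hv.symm)
  have hb : (0:ℝ) < (2*(v:ℝ))⁻¹ := by positivity
  have he : (fun x:ℝ => gaussianPDFReal 0 v x * x^2)
      = fun x => (√(2*π*v))⁻¹ * (x^2 * rexp (-(2*(v:ℝ))⁻¹ * x^2)) := by
    rw [pdf0_eq]; ext x; ring
  rw [he]
  have key : (fun x:ℝ => x ^ (2:ℝ) * rexp (-(2*(v:ℝ))⁻¹ * x^2))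
      = (fun x:ℝ => x^2 * rexp (-(2*(v:ℝ))⁻¹ * x^2)) := by
    ext x; rw [← Real.rpow_natCast x 2]; norm_num
  exact (key ▸ integrable_rpow_mul_exp_neg_mul_sq hb (by norm_num : (-1:ℝ) < 2)).const_mul _

lemma integrable_pdf0_moment1 {v : ℝ≥0} (hv : v ≠ 0) :
    Integrable (fun x:ℝ => gaussianPDFReal 0 v x * x) := by
  have hv' : (0:ℝ) < v := lt_of_le_of_ne v.coe_nonneg (by exact_mod_cast hv.symm)
  have hb : (0:ℝ) < (2*(v:ℝ))⁻¹ := by positivity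
  have he : (fun x:ℝ => gaussianPDFReal 0 v x * x)
      = fun x => (√(2*π*v))⁻¹ * (x * rexp (-(2*(v:ℝ))⁻¹ * x^2)) := by
    rw [pdf0_eq]; ext x; ring
  rw [he]
  exact (integrable_mul_exp_neg_mul_sq hb).const_mul _


lemma integral_gaussianReal_eq (μ : ℝ) {v : ℝ≥0} (hv : v ≠ 0) (g : ℝ → ℝ) :
    ∫ x, g x ∂(gaussianReal μ v) = ∫ x, gaussianPDFReal 0 v x * g (x + μ) := by
  rw [gaussianReal_of_var_ne_zero μ hv]
  have hpdf : (gaussianPDF μ v) = fun x => ((gaussianPDFReal μ v x).toNNReal : ℝ≥0∞) := rfl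
  rw [hpdf, integral_withDensity_eq_integral_smul
    ((measurable_gaussianPDFReal μ v).real_toNNReal) g]
  have h1 : ∀ x:ℝ, (gaussianPDFReal μ v x).toNNReal • g x = gaussianPDFReal μ v x * g x := by
    intro x
    rw [NNReal.smul_def, smul_eq_mul, Real.coe_toNNReal _ (gaussianPDFReal_nonneg μ v x)]
  simp_rw [h1]
  rw [← integral_add_right_eq_self (fun x => gaussianPDFReal μ v x * g x) μ]
  congr 1
  ext x
  rw [gaussianPDFReal_add x μ, sub_self]

lemma integrable_gaussianReal {v : ℝ≥0} (hv : v ≠ 0) {μ : ℝ} {g : ℝ → ℝ}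
    (hg : Integrable (fun x => gaussianPDFReal 0 v x * g (x + μ))) :
    Integrable g (gaussianReal μ v) := by
  rw [gaussianReal_of_var_ne_zero μ hv]
  have hpdf : (gaussianPDF μ v) = fun x => ((gaussianPDFReal μ v x).toNNReal : ℝ≥0∞) := rfl
  rw [hpdf, integrable_withDensity_iff_integrable_smul
    ((measurable_gaussianPDFReal μ v).real_toNNReal)]
  have h2 := hg.comp_sub_right μ
  refine h2.congr (Filter.Eventually.of_forall fun x => ?_)
  simp only [sub_add_cancel]
  rw [NNReal.smul_def, smul_eq_mul, Real.coe_toNNReal _ (gaussianPDFReal_nonneg μ v x)]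
  congr 1
  rw [gaussianPDFReal_sub, zero_add]

lemma integrable_poly2_pdf0 {v : ℝ≥0} (hv : v ≠ 0) (a b c : ℝ) :
    Integrable (fun x:ℝ => gaussianPDFReal 0 v x * (a * x^2 + b * x + c)) := by
  have h : (fun x:ℝ => gaussianPDFReal 0 v x * (a * x^2 + b * x + c))
      = fun x => a * (gaussianPDFReal 0 v x * x^2) + (b * (gaussianPDFReal 0 v x * x)
          + c * gaussianPDFReal 0 v x) := by ext x; ring
  rw [h]
  exact ((integrable_pdf0_moment2 hv).const_mul a).add
    (((integrable_pdf0_moment1 hv).const_mul b).add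
      ((integrable_gaussianPDFReal 0 v).const_mul c))

lemma integral_poly2_pdf0 {v : ℝ≥0} (hv : v ≠ 0) (a b c : ℝ) :
    ∫ x:ℝ, gaussianPDFReal 0 v x * (a * x^2 + b * x + c) = a * v + c := by
  have h : (fun x:ℝ => gaussianPDFReal 0 v x * (a * x^2 + b * x + c))
      = fun x => a * (gaussianPDFReal 0 v x * x^2) + (b * (gaussianPDFReal 0 v x * x)
          + c * gaussianPDFReal 0 v x) := by ext x; ring
  have hI1 : ∫ x:ℝ, (a * (gaussianPDFReal 0 v x * x^2)
        + (b * (gaussianPDFReal 0 v x * x) + c * gaussianPDFReal 0 v x))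
      = (∫ x:ℝ, a * (gaussianPDFReal 0 v x * x^2))
        + ∫ x:ℝ, (b * (gaussianPDFReal 0 v x * x) + c * gaussianPDFReal 0 v x) :=
    integral_add ((integrable_pdf0_moment2 hv).const_mul a)
      (((integrable_pdf0_moment1 hv).const_mul b).add
        ((integrable_gaussianPDFReal 0 v).const_mul c))
  have hI2 : ∫ x:ℝ, (b * (gaussianPDFReal 0 v x * x) + c * gaussianPDFReal 0 v x)
      = (∫ x:ℝ, b * (gaussianPDFReal 0 v x * x)) + ∫ x:ℝ, c * gaussianPDFReal 0 v x :=
    integral_add ((integrable_pdf0_moment1 hv).const_mul b)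
      ((integrable_gaussianPDFReal 0 v).const_mul c)
  rw [h, hI1, hI2, integral_const_mul, integral_const_mul, integral_const_mul,
    pdf0_moment2 hv, pdf0_moment1, integral_gaussianPDFReal_eq_one 0 hv]
  ring

lemma integral_sub_sq_gaussianReal (μ c : ℝ) {v : ℝ≥0} (hv : v ≠ 0) :
    ∫ x, (x - c)^2 ∂(gaussianReal μ v) = v + (μ - c)^2 := by
  rw [integral_gaussianReal_eq μ hv]
  have h : (fun x:ℝ => gaussianPDFReal 0 v x * (x + μ - c)^2)
      = fun x => gaussianPDFReal 0 v x * (1 * x^2 + (2*(μ-c)) * x + (μ-c)^2) := by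
    ext x; ring
  rw [h, integral_poly2_pdf0 hv]
  ring

lemma integral_id_gaussianReal' (μ : ℝ) {v : ℝ≥0} (hv : v ≠ 0) :
    ∫ x, x ∂(gaussianReal μ v) = μ := by
  rw [integral_gaussianReal_eq μ hv (fun x => x)]
  have h : (fun x:ℝ => gaussianPDFReal 0 v x * (x + μ))
      = fun x => gaussianPDFReal 0 v x * (0 * x^2 + 1 * x + μ) := by ext x; ring
  rw [h, integral_poly2_pdf0 hv]
  ring

lemma integrable_id_gaussianReal (μ : ℝ) {v : ℝ≥0} (hv : v ≠ 0) :
    Integrable (fun x => x) (gaussianReal μ v) := by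
  refine integrable_gaussianReal hv ?_
  have h : (fun x:ℝ => gaussianPDFReal 0 v x * (x + μ))
      = fun x => gaussianPDFReal 0 v x * (0 * x^2 + 1 * x + μ) := by ext x; ring
  rw [h]; exact integrable_poly2_pdf0 hv 0 1 μ

lemma integrable_sub_sq_gaussianReal (μ c : ℝ) {v : ℝ≥0} (hv : v ≠ 0) :
    Integrable (fun x => (x - c)^2) (gaussianReal μ v) := by
  refine integrable_gaussianReal hv ?_
  have h : (fun x:ℝ => gaussianPDFReal 0 v x * (x + μ - c)^2)
      = fun x => gaussianPDFReal 0 v x * (1 * x^2 + (2*(μ-c)) * x + (μ-c)^2) := by ext x; ring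
  rw [h]; exact integrable_poly2_pdf0 hv _ _ _

/-- If `X ~ N(0.1, 0.4)` under `P₁` and `X ~ N(-0.1, 0.4)` under `P₂`, then the upper variance
equals `Var_{P*}(X) = 0.41 > 0.4 = max{Var_{P₁}(X), Var_{P₂}(X)}` with `P* = (P₁+P₂)/2`,
while the lower variance equals `0.4`. -/
theorem upper_variance_stmt15
    {Ω : Type*} [MeasurableSpace Ω] (P₁ P₂ : Measure Ω)
    [IsProbabilityMeasure P₁] [IsProbabilityMeasure P₂]
    (X : Ω → ℝ) (hX : Measurable X)
    (h1 : P₁.map X = gaussianReal 0.1 0.4)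
    (h2 : P₂.map X = gaussianReal (-0.1) 0.4) :
    (⨅ x : ℝ, max (∫ ω, (X ω - x) ^ 2 ∂P₁) (∫ ω, (X ω - x) ^ 2 ∂P₂)) = 0.41
      ∧ (∫ ω, (X ω - ∫ ω', X ω' ∂((2 : ENNReal)⁻¹ • (P₁ + P₂))) ^ 2
          ∂((2 : ENNReal)⁻¹ • (P₁ + P₂))) = 0.41
      ∧ max (∫ ω, (X ω - ∫ ω', X ω' ∂P₁) ^ 2 ∂P₁)
          (∫ ω, (X ω - ∫ ω', X ω' ∂P₂) ^ 2 ∂P₂) = 0.4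
      ∧ (0.4 : ℝ) < 0.41
      ∧ (⨅ x : ℝ, min (∫ ω, (X ω - x) ^ 2 ∂P₁) (∫ ω, (X ω - x) ^ 2 ∂P₂)) = 0.4 := by
  have hsm : ∀ c : ℝ, AEStronglyMeasurable (fun x : ℝ => (x - c)^2) (gaussianReal 0.1 0.4) :=
    fun c => ((measurable_id.sub_const c).pow_const 2).aestronglyMeasurable
  have hP1 : ∀ c : ℝ, ∫ ω, (X ω - c)^2 ∂P₁ = 0.4 + (0.1 - c)^2 := by
    intro c
    have := integral_map (μ := P₁) hX.aemeasurable
      (f := fun x : ℝ => (x - c)^2)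
      (by rw [h1]; exact ((measurable_id.sub_const c).pow_const 2).aestronglyMeasurable)
    rw [← this, h1, integral_sub_sq_gaussianReal _ _ ne04, coe04]
  have hP2 : ∀ c : ℝ, ∫ ω, (X ω - c)^2 ∂P₂ = 0.4 + (-0.1 - c)^2 := by
    intro c
    have := integral_map (μ := P₂) hX.aemeasurable
      (f := fun x : ℝ => (x - c)^2)
      (by rw [h2]; exact ((measurable_id.sub_const c).pow_const 2).aestronglyMeasurable)
    rw [← this, h2, integral_sub_sq_gaussianReal _ _ ne04, coe04]
  have hM1 : ∫ ω, X ω ∂P₁ = 0.1 := by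
    have := integral_map (μ := P₁) hX.aemeasurable (f := fun x : ℝ => x)
      (by rw [h1]; exact measurable_id.aestronglyMeasurable)
    rw [← this, h1, integral_id_gaussianReal' _ ne04]
  have hM2 : ∫ ω, X ω ∂P₂ = -0.1 := by
    have := integral_map (μ := P₂) hX.aemeasurable (f := fun x : ℝ => x)
      (by rw [h2]; exact measurable_id.aestronglyMeasurable)
    rw [← this, h2, integral_id_gaussianReal' _ ne04]
  have hI1 : Integrable X P₁ := by
    have := (integrable_map_measure (f := X) (g := fun x : ℝ => x)
      (by rw [h1]; exact measurable_id.aestronglyMeasurable) hX.aemeasurable).mp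
      (by rw [h1]; exact integrable_id_gaussianReal _ ne04)
    exact this
  have hI2 : Integrable X P₂ := by
    have := (integrable_map_measure (f := X) (g := fun x : ℝ => x)
      (by rw [h2]; exact measurable_id.aestronglyMeasurable) hX.aemeasurable).mp
      (by rw [h2]; exact integrable_id_gaussianReal _ ne04)
    exact this
  have hIS1 : ∀ c : ℝ, Integrable (fun ω => (X ω - c)^2) P₁ := by
    intro c
    exact (integrable_map_measure (f := X) (g := fun x : ℝ => (x - c)^2)
      (by rw [h1]; exact ((measurable_id.sub_const c).pow_const 2).aestronglyMeasurable)
      hX.aemeasurable).mp (by rw [h1]; exact integrable_sub_sq_gaussianReal _ _ ne04)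
  have hIS2 : ∀ c : ℝ, Integrable (fun ω => (X ω - c)^2) P₂ := by
    intro c
    exact (integrable_map_measure (f := X) (g := fun x : ℝ => (x - c)^2)
      (by rw [h2]; exact ((measurable_id.sub_const c).pow_const 2).aestronglyMeasurable)
      hX.aemeasurable).mp (by rw [h2]; exact integrable_sub_sq_gaussianReal _ _ ne04)
  have htr : ((2 : ℝ≥0∞)⁻¹).toReal = (1/2 : ℝ) := by simp
  have hMeanMix : ∫ ω', X ω' ∂((2 : ENNReal)⁻¹ • (P₁ + P₂)) = 0 := by
    rw [integral_smul_measure, integral_add_measure hI1 hI2, hM1, hM2, htr]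
    norm_num
  refine ⟨?_, ?_, ?_, by norm_num, ?_⟩
  · simp only [hP1, hP2]
    have key : ∀ x : ℝ, (0.41:ℝ) ≤ max (0.4+(0.1-x)^2) (0.4+(-0.1-x)^2) := by
      intro x
      rcases le_total x 0 with h | h
      · exact le_max_of_le_left (by nlinarith)
      · exact le_max_of_le_right (by nlinarith)
    refine le_antisymm ?_ (le_ciInf key)
    refine le_trans (ciInf_le ⟨0.41, ?_⟩ 0) (by norm_num)
    rintro y ⟨x, rfl⟩
    exact key x
  · rw [hMeanMix, integral_smul_measure, integral_add_measure (hIS1 0) (hIS2 0),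
      hP1 0, hP2 0, htr]
    norm_num
  · rw [hM1, hM2, hP1 0.1, hP2 (-0.1)]
    norm_num
  · simp only [hP1, hP2]
    have key : ∀ x : ℝ, (0.4:ℝ) ≤ min (0.4+(0.1-x)^2) (0.4+(-0.1-x)^2) := by
      intro x
      exact le_min (by nlinarith [sq_nonneg (0.1 - x)]) (by nlinarith [sq_nonneg (-0.1 - x)])
    refine le_antisymm ?_ (le_ciInf key)
    refine le_trans (ciInf_le ⟨0.4, ?_⟩ 0.1) (by norm_num)
    rintro y ⟨x, rfl⟩
    exact key x
end
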